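/- For all integers k ≥ 2 and n ≥ 2, there exists an adjacency-hopping de Bruijn sequence H(k,n) of length L = k·(k-1)^(n-1); that is, there exists a function s : ZMod (k·(k-1)^(n-1)) → Fin k such that s i ≠ s (i+1) for all i, and for every adjacency-hopping word w : Fin n → Fin k there exists exactly one i with s (i + j) = w j for all j : Fin n. -/

import Mathlib

/-- A word `w` of length `m` over the alphabet `Fin k` is adjacency-hopping if
`w i ≠ w (i+1)` for all `i` with `i + 1 < m`. -/
def IsAdjHop (k m : ℕ) (w : Fin m → Fin k) : Prop :=
  ∀ i : ℕ, (h : i + 1 < m) → w ⟨i, by omega⟩ ≠ w ⟨i + 1, h⟩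


/-- `s : ZMod L → Fin k` is an adjacency-hopping de Bruijn sequence `H(k,n)` if all
neighboring codes differ and every adjacency-hopping word of length `n` occurs exactly
once as a (cyclic) subsequence. -/
def IsAHDB (k n L : ℕ) (s : ZMod L → Fin k) : Prop :=
  (∀ i, s i ≠ s (i + 1)) ∧
  ∀ w : Fin n → Fin k, IsAdjHop k n w →
    ∃! i : ZMod L, ∀ j : Fin n, s (i + (j : ℕ)) = w j


open Finset

set_option linter.unusedSectionVars false
section Euler
variable {E V : Type*} [Fintype E] [DecidableEq E] [DecidableEq V]
variable (src tgt : E → V)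

/-- Reachability in the directed multigraph. -/
inductive EReach : V → V → Prop
  | refl (v) : EReach v v
  | cons (e : E) {w} : EReach (tgt e) w → EReach (src e) w

/-- The cyclic wrap condition for a closed trail. -/
def Wrap (l : List E) : Prop := ∀ x ∈ l.getLast?, ∀ y ∈ l.head?, tgt x = src y

/-- Closed trail. -/
def IsCT (l : List E) : Prop :=
  l ≠ [] ∧ l.Nodup ∧ l.Chain' (fun a b => tgt a = src b) ∧ Wrap src tgt l

variable {src tgt}

lemma flow (w : V) :
    ∀ (l : List E), l.Chain' (fun a b => tgt a = src b) → ∀ (h : l ≠ []),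
    l.countP (fun e => src e = w) + (if tgt (l.getLast h) = w then 1 else 0)
      = l.countP (fun e => tgt e = w) + (if src (l.head h) = w then 1 else 0) := by
  intro l
  induction l with
  | nil => intro _ h; exact absurd rfl h
  | cons a t ih =>
    intro hch h
    match t with
    | [] =>
      simp only [List.countP_cons, List.countP_nil, List.getLast_singleton,
        List.head_cons]
      split_ifs <;> simp_all
    | b :: t' =>
      have hab : tgt a = src b := (List.isChain_cons_cons.mp hch).1
      have hch' : (b :: t').Chain' (fun a b => tgt a = src b) := (List.isChain_cons_cons.mp hch).2
      have hne : (b :: t') ≠ [] := by simp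
      have := ih hch' hne
      have hlast : (a :: b :: t').getLast h = (b :: t').getLast hne := by
        simp [List.getLast_cons]
      rw [hlast]
      simp only [List.countP_cons, List.head_cons] at *
      have h1 : (if decide (src a = w) = true then 1 else 0)
          = (if src a = w then 1 else 0) := by split_ifs <;> simp_all
      have h2 : (if decide (tgt a = w) = true then 1 else 0)
          = (if tgt a = w then 1 else 0) := by split_ifs <;> simp_all
      have h3 : (if tgt a = w then 1 else 0) = (if src b = w then 1 else 0) := by
        rw [hab]
      grind

lemma closed_countP (l : List E) (hct : IsCT src tgt l) (w : V) :
    l.countP (fun e => src e = w) = l.countP (fun e => tgt e = w) := by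
  obtain ⟨hne, _, hch, hw⟩ := hct
  have := flow w l hch hne
  have hwr : tgt (l.getLast hne) = src (l.head hne) :=
    hw _ (by rw [List.getLast?_eq_getLast hne]; simp) _ (by rw [List.head?_eq_head hne]; simp)
  rw [hwr] at this
  omega

/-- In a graph that is balanced away from `used`, a nonunclosed trail can be extended. -/
lemma stuck (used : Finset E)
    (hbal : ∀ v, (univ.filter fun e => src e = v ∧ e ∉ used).card
               = (univ.filter fun e => tgt e = v ∧ e ∉ used).card)
    (l : List E) (hne : l ≠ []) (hnd : l.Nodup)
    (hch : l.Chain' (fun a b => tgt a = src b))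
    (hu : ∀ e ∈ l, e ∉ used)
    (hop : tgt (l.getLast hne) ≠ src (l.head hne)) :
    ∃ g, g ∉ used ∧ g ∉ l ∧ src g = tgt (l.getLast hne) := by
  set u := tgt (l.getLast hne) with hu'
  have hflow := flow u l hch hne
  rw [if_pos rfl, if_neg (fun h => hop h.symm)] at hflow
  -- l's edges with src = u, as a finset
  set S : Finset E := l.toFinset.filter (fun e => src e = u) with hS
  set T : Finset E := l.toFinset.filter (fun e => tgt e = u) with hT
  have hSeq : S = (l.filter (fun e => decide (src e = u))).toFinset := by
    ext e; simp [hS]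
  have hTeq : T = (l.filter (fun e => decide (tgt e = u))).toFinset := by
    ext e; simp [hT]
  have hScard : S.card = l.countP (fun e => src e = u) := by
    rw [hSeq, List.toFinset_card_of_nodup (hnd.filter _), List.countP_eq_length_filter]
  have hTcard : T.card = l.countP (fun e => tgt e = u) := by
    rw [hTeq, List.toFinset_card_of_nodup (hnd.filter _), List.countP_eq_length_filter]
  set A : Finset E := univ.filter (fun e => src e = u ∧ e ∉ used) with hA
  set B : Finset E := univ.filter (fun e => tgt e = u ∧ e ∉ used) with hB
  have hSA : S ⊆ A := by
    intro e he
    rw [hS, Finset.mem_filter] at he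
    rw [hA, Finset.mem_filter]
    exact ⟨Finset.mem_univ e, he.2, hu e (List.mem_toFinset.mp he.1)⟩
  have hTB : T ⊆ B := by
    intro e he
    rw [hT, Finset.mem_filter] at he
    rw [hB, Finset.mem_filter]
    exact ⟨Finset.mem_univ e, he.2, hu e (List.mem_toFinset.mp he.1)⟩
  have hAB : A.card = B.card := hbal u
  have hcard : S.card < A.card := by
    have h1 := Finset.card_le_card hTB
    omega
  have : ∃ g ∈ A, g ∉ S := by
    by_contra hcon
    push_neg at hcon
    exact absurd (Finset.card_le_card hcon) (by omega)
  obtain ⟨g, hgA, hgS⟩ := this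
  rw [hA, Finset.mem_filter] at hgA
  refine ⟨g, hgA.2.2, ?_, hgA.2.1⟩
  intro hgl
  exact hgS (by rw [hS, Finset.mem_filter]; exact ⟨List.mem_toFinset.mpr hgl, hgA.2.1⟩)

/-- Greedy extension of a trail in the balanced complement of `used` yields a closed trail
with the same head. -/
lemma growToClosed (used : Finset E)
    (hbal : ∀ v, (univ.filter fun e => src e = v ∧ e ∉ used).card
               = (univ.filter fun e => tgt e = v ∧ e ∉ used).card) :
    ∀ (N : ℕ) (l : List E) (hne : l ≠ []), l.Nodup →
      l.Chain' (fun a b => tgt a = src b) → (∀ e ∈ l, e ∉ used) →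
      Fintype.card E - l.length ≤ N →
      ∃ m, IsCT src tgt m ∧ (∀ e ∈ m, e ∉ used) ∧ m.head? = l.head? := by
  intro N
  induction N with
  | zero =>
    intro l hne hnd hch hu hlen
    by_cases hcl : tgt (l.getLast hne) = src (l.head hne)
    · exact ⟨l, ⟨hne, hnd, hch, fun x hx y hy => by
        rw [List.getLast?_eq_getLast hne] at hx
        rw [List.head?_eq_head hne] at hy
        simp only [Option.mem_some_iff] at hx hy
        rw [← hx, ← hy]; exact hcl⟩, hu, rfl⟩
    · obtain ⟨g, _, hgl, _⟩ := stuck used hbal l hne hnd hch hu hcl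
      have : (g :: l).Nodup := List.nodup_cons.mpr ⟨hgl, hnd⟩
      have := this.length_le_card
      simp only [List.length_cons] at this
      omega
  | succ N ih =>
    intro l hne hnd hch hu hlen
    by_cases hcl : tgt (l.getLast hne) = src (l.head hne)
    · exact ⟨l, ⟨hne, hnd, hch, fun x hx y hy => by
        rw [List.getLast?_eq_getLast hne] at hx
        rw [List.head?_eq_head hne] at hy
        simp only [Option.mem_some_iff] at hx hy
        rw [← hx, ← hy]; exact hcl⟩, hu, rfl⟩
    · obtain ⟨g, hgu, hgl, hgsrc⟩ := stuck used hbal l hne hnd hch hu hcl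
      have hne' : l ++ [g] ≠ [] := by simp
      have hnd' : (l ++ [g]).Nodup := by
        rw [List.nodup_append]
        refine ⟨hnd, List.nodup_singleton g, ?_⟩
        intro a ha b hb hab
        rw [List.mem_singleton] at hb
        exact hgl (hb ▸ hab ▸ ha)
      have hch' : (l ++ [g]).Chain' (fun a b => tgt a = src b) := by
        unfold List.Chain'
        rw [List.isChain_append]
        refine ⟨hch, List.isChain_singleton g, ?_⟩
        intro x hx y hy
        rw [List.getLast?_eq_getLast hne] at hx
        simp only [List.head?_cons, Option.mem_some_iff] at hx hy
        rw [← hx, ← hy, hgsrc]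
      have hu' : ∀ e ∈ l ++ [g], e ∉ used := by
        intro e he
        rcases List.mem_append.mp he with h | h
        · exact hu e h
        · simp only [List.mem_singleton] at h; rw [h]; exact hgu
      have hlen' : Fintype.card E - (l ++ [g]).length ≤ N := by
        simp only [List.length_append, List.length_singleton]
        omega
      obtain ⟨m, hm, hmu, hmh⟩ := ih (l ++ [g]) hne' hnd' hch' hu' hlen'
      refine ⟨m, hm, hmu, ?_⟩
      rw [hmh]
      match l with
      | a :: t => simp


lemma rotCT (l₁ : List E) (x : E) (l₂ : List E) (h : IsCT src tgt (l₁ ++ x :: l₂)) :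
    IsCT src tgt ((x :: l₂) ++ l₁) := by
  obtain ⟨hne, hnd, hch, hw⟩ := h
  unfold List.Chain' at hch
  rw [List.isChain_append] at hch
  obtain ⟨hc1, hc2, hc3⟩ := hch
  refine ⟨by simp, (List.perm_append_comm.nodup_iff).mpr hnd, ?_, ?_⟩
  · unfold List.Chain'
    rw [List.isChain_append]
    refine ⟨hc2, hc1, ?_⟩
    intro a ha b hb
    have ha' : a ∈ (l₁ ++ x :: l₂).getLast? := by
      rw [List.getLast?_append_of_ne_nil l₁ (by simp)]; exact ha
    have hb' : b ∈ (l₁ ++ x :: l₂).head? := by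
      rcases l₁ with _ | ⟨c, t⟩
      · simp at hb
      · simpa using hb
    exact hw a ha' b hb'
  · intro a ha b hb
    simp only [List.cons_append, List.head?_cons, Option.mem_some_iff] at hb
    subst hb
    rcases l₁ with _ | ⟨c, t⟩
    · simp only [List.append_nil] at ha
      exact hw a (by simpa using ha) x (by simp)
    · rw [List.getLast?_append_of_ne_nil _ (by simp)] at ha
      exact hc3 a ha x (by simp)

lemma exitCT (l : List E) (hct : IsCT src tgt l)
    (hconn : ∀ u v, EReach src tgt u v)
    (g₀ : E) (hg₀ : g₀ ∉ l) :
    ∃ g x, g ∉ l ∧ x ∈ l ∧ src g = src x := by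
  obtain ⟨hne, hnd, hch, hw⟩ := hct
  have hnext : ∀ e ∈ l, ∃ x ∈ l, src x = tgt e := by
    intro e he
    obtain ⟨p, hp⟩ := List.get_of_mem he
    by_cases hlt : p.1 + 1 < l.length
    · have hR := List.isChain_iff_getElem.mp hch p.1 (by omega)
      refine ⟨l.get ⟨p.1 + 1, hlt⟩, List.get_mem l _, ?_⟩
      rw [List.get_eq_getElem, ← hR]
      exact congrArg tgt (by rw [← hp]; rfl)
    · have hp1 : p.1 = l.length - 1 := by have := p.2; omega
      have hegl : e = l.getLast hne := by
        rw [List.getLast_eq_getElem, ← hp]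
        simp [hp1]
      refine ⟨l.head hne, List.head_mem hne, ?_⟩
      have := hw (l.getLast hne) (by rw [List.getLast?_eq_getLast hne]; simp)
        (l.head hne) (by rw [List.head?_eq_head hne]; simp)
      rw [hegl, this]
  have main : ∀ u w, EReach src tgt u w → (∃ x ∈ l, src x = u) →
      (∃ g x, g ∉ l ∧ x ∈ l ∧ src g = src x) ∨ (∃ x ∈ l, src x = w) := by
    intro u w hr
    induction hr with
    | refl v => exact fun h => Or.inr h
    | cons e hr ih =>
      intro h
      by_cases hel : e ∈ l
      · exact ih (hnext e hel)
      · obtain ⟨x, hx, hsx⟩ := h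
        exact Or.inl ⟨e, x, hel, hx, hsx.symm⟩
  rcases main (src (l.head hne)) (src g₀) (hconn _ _)
    ⟨l.head hne, List.head_mem hne, rfl⟩ with h | h
  · exact h
  · obtain ⟨x, hx, hsx⟩ := h
    exact ⟨g₀, x, hg₀, hx, hsx.symm⟩

lemma complBal (l : List E) (hct : IsCT src tgt l)
    (hbal : ∀ v, (univ.filter fun e => src e = v).card
               = (univ.filter fun e => tgt e = v).card) :
    ∀ v, (univ.filter fun e => src e = v ∧ e ∉ l.toFinset).card
       = (univ.filter fun e => tgt e = v ∧ e ∉ l.toFinset).card := by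
  intro v
  have hnd := hct.2.1
  have hsplit : ∀ f : E → V,
      (univ.filter fun e => f e = v ∧ e ∈ l.toFinset).card
        + (univ.filter fun e => f e = v ∧ e ∉ l.toFinset).card
      = (univ.filter fun e => f e = v).card := by
    intro f
    rw [← Finset.filter_filter (fun e => f e = v) (fun e => e ∈ l.toFinset),
        ← Finset.filter_filter (fun e => f e = v) (fun e => e ∉ l.toFinset)]
    exact Finset.card_filter_add_card_filter_not _
  have hin : ∀ f : E → V, (univ.filter fun e => f e = v ∧ e ∈ l.toFinset)
      = (l.filter (fun e => decide (f e = v))).toFinset := by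
    intro f; ext e; simp [and_comm]
  have hcnt : ∀ f : E → V, (univ.filter fun e => f e = v ∧ e ∈ l.toFinset).card
      = l.countP (fun e => f e = v) := by
    intro f
    rw [hin, List.toFinset_card_of_nodup (hnd.filter _), List.countP_eq_length_filter]
  have h1 := hsplit src
  have h2 := hsplit tgt
  have h3 := hcnt src
  have h4 := hcnt tgt
  have h5 := closed_countP l hct v
  have h6 := hbal v
  omega

theorem euler_circuit
    (hbal : ∀ v, (univ.filter fun e => src e = v).card
               = (univ.filter fun e => tgt e = v).card)
    (hconn : ∀ u v, EReach src tgt u v) (e₀ : E) :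
    ∃ l : List E, IsCT src tgt l ∧ ∀ e, e ∈ l := by
  have hb0 : ∀ v, (univ.filter fun e => src e = v ∧ e ∉ (∅ : Finset E)).card
      = (univ.filter fun e => tgt e = v ∧ e ∉ (∅ : Finset E)).card := by
    simpa using hbal
  obtain ⟨c₀, hc₀, _, _⟩ := growToClosed (src := src) (tgt := tgt) ∅ hb0 (Fintype.card E)
    [e₀] (by simp) (List.nodup_singleton e₀) (List.isChain_singleton e₀) (by simp)
    (by simp)
  have grow : ∀ (N : ℕ) (l : List E), IsCT src tgt l → Fintype.card E - l.length ≤ N →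
      ∃ m, IsCT src tgt m ∧ ∀ e, e ∈ m := by
    intro N
    induction N with
    | zero =>
      intro l hct hlen
      refine ⟨l, hct, ?_⟩
      by_contra hcon
      push_neg at hcon
      obtain ⟨g₀, hg₀⟩ := hcon
      have : (g₀ :: l).Nodup := List.nodup_cons.mpr ⟨hg₀, hct.2.1⟩
      have := this.length_le_card
      simp only [List.length_cons] at this
      omega
    | succ N ih =>
      intro l hct hlen
      by_cases hall : ∀ e, e ∈ l
      · exact ⟨l, hct, hall⟩
      · push_neg at hall
        obtain ⟨g₀, hg₀⟩ := hall
        obtain ⟨g, x, hgl, hxl, hgx⟩ := exitCT l hct hconn g₀ hg₀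
        obtain ⟨l₁, l₂, hsplit⟩ := List.append_of_mem hxl
        subst hsplit
        have hct' : IsCT src tgt ((x :: l₂) ++ l₁) := rotCT l₁ x l₂ hct
        set l' := (x :: l₂) ++ l₁ with hl'
        have hperm : (l₁ ++ x :: l₂).Perm l' := List.perm_append_comm
        have hbal' := complBal (l₁ ++ x :: l₂) hct hbal
        have hgused : g ∉ (l₁ ++ x :: l₂).toFinset := by
          rw [List.mem_toFinset]; exact hgl
        obtain ⟨m, hmct, hmu, hmh⟩ := growToClosed (src := src) (tgt := tgt)
          (l₁ ++ x :: l₂).toFinset hbal' (Fintype.card E) [g] (by simp)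
          (List.nodup_singleton g) (List.isChain_singleton g)
          (by intro e he; rw [List.mem_singleton] at he; rw [he]; exact hgused)
          (by simp)
        obtain ⟨hmne, hmnd, hmch, hmw⟩ := hmct
        simp only [List.head?_cons] at hmh
        have hmhead : m.head hmne = g := by
          rw [List.head?_eq_head hmne] at hmh
          exact Option.some.inj hmh
        have hl'ne : l' ≠ [] := by simp [hl']
        have hdisj : ∀ a ∈ m, a ∉ l' := by
          intro a ham hal'
          have : a ∈ l₁ ++ x :: l₂ := hperm.mem_iff.mpr hal'
          exact hmu a ham (List.mem_toFinset.mpr this)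
        obtain ⟨hl'ne2, hl'nd, hl'ch, hl'w⟩ := hct'
        have hcomb : IsCT src tgt (m ++ l') := by
          refine ⟨by simp [hmne], ?_, ?_, ?_⟩
          · rw [List.nodup_append]
            exact ⟨hmnd, hl'nd, fun a ha b hb hab => hdisj a ha (hab ▸ hb)⟩
          · unfold List.Chain'
            rw [List.isChain_append]
            refine ⟨hmch, hl'ch, ?_⟩
            intro a ha b hb
            have h1 : tgt a = src (m.head hmne) := by
              refine hmw a ha (m.head hmne) ?_
              rw [List.head?_eq_head hmne]; simp
            rw [h1, hmhead, hgx]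
            simp only [hl', List.cons_append, List.head?_cons, Option.mem_some_iff] at hb
            rw [hb]
          · intro a ha b hb
            rw [List.getLast?_append_of_ne_nil m hl'ne] at ha
            have hb' : b ∈ m.head? := by
              rcases m with _ | ⟨c, t⟩
              · exact absurd rfl hmne
              · simpa using hb
            rw [List.head?_eq_head hmne] at hb'
            have hb'' : b = g := by rw [← hmhead]; exact (Option.some.inj hb').symm
            have h1 : tgt a = src (l'.head hl'ne) :=
              hl'w a ha (l'.head hl'ne) (by rw [List.head?_eq_head hl'ne]; simp)
            have h2 : l'.head hl'ne = x := by simp [hl']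
            rw [hb'', h1, h2, hgx]
        have hm1 : 1 ≤ m.length := by
          rcases m with _ | ⟨c, t⟩
          · exact absurd rfl hmne
          · simp
        have hlonger : (m ++ l').length = m.length + l'.length := List.length_append
        have hlen' : Fintype.card E - (m ++ l').length ≤ N := by
          have h1 : l'.length = (l₁ ++ x :: l₂).length := hperm.length_eq.symm
          have h2 : (m ++ l').length = m.length + l'.length := List.length_append
          have h3 : (l₁ ++ x :: l₂).length = l₁.length + (x :: l₂).length := List.length_append
          omega
        exact ih (m ++ l') hcomb hlen'
  exact grow (Fintype.card E) c₀ hc₀ (by omega)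

end Euler

instance (k m : ℕ) (w : Fin m → Fin k) : Decidable (IsAdjHop k m w) := by
  refine decidable_of_iff (∀ i : Fin m, (h : (i : ℕ) + 1 < m) → w ⟨i, by omega⟩ ≠ w ⟨(i : ℕ) + 1, h⟩) ?_
  constructor
  · intro H i h
    exact H ⟨i, by omega⟩ h
  · intro H i h
    exact H i h

/-- Adjacency-hopping words of length `m`. -/
def AHW (k m : ℕ) : Type := {w : Fin m → Fin k // IsAdjHop k m w}

instance (k m : ℕ) : Fintype (AHW k m) := Subtype.fintype _
instance (k m : ℕ) : DecidableEq (AHW k m) := Subtype.instDecidableEq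

/-- First `m` letters of a word of length `m+1`. -/
def ahSrc (k m : ℕ) (e : AHW k (m + 1)) : AHW k m :=
  ⟨fun j => e.1 ⟨j.1, by omega⟩, fun i h => e.2 i (by omega)⟩

/-- Last `m` letters of a word of length `m+1`. -/
def ahTgt (k m : ℕ) (e : AHW k (m + 1)) : AHW k m :=
  ⟨fun j => e.1 ⟨j.1 + 1, by omega⟩, fun i h => e.2 (i + 1) (by omega)⟩

/-- Extension of a word by a letter differing from the final letter. -/
def ahExt (k m : ℕ) (v : AHW k (m + 1)) (x : Fin k) (hx : x ≠ v.1 ⟨m, by omega⟩) :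
    AHW k (m + 2) :=
  ⟨fun j => if h : j.1 < m + 1 then v.1 ⟨j.1, h⟩ else x, by
    intro i h
    by_cases h1 : i + 1 < m + 1
    · have h0 : i < m + 1 := by omega
      simp only [dif_pos h1, dif_pos h0]
      exact v.2 i h1
    · have h2 : i + 1 = m + 1 := by omega
      have h0 : i < m + 1 := by omega
      simp only [dif_pos h0, dif_neg h1]
      have : (⟨i, h0⟩ : Fin (m+1)) = ⟨m, by omega⟩ := by
        apply Fin.ext; simp; omega
      rw [this]
      exact fun hc => hx hc.symm⟩

lemma ahSrc_ext (k m : ℕ) (v : AHW k (m + 1)) (x : Fin k) (hx : x ≠ v.1 ⟨m, by omega⟩) :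
    ahSrc k (m + 1) (ahExt k m v x hx) = v := by
  apply Subtype.ext
  funext j
  show (if h : j.1 < m + 1 then v.1 ⟨j.1, h⟩ else x) = v.1 j
  rw [dif_pos j.2]

lemma ahTgt_ext (k m : ℕ) (v : AHW k (m + 1)) (x : Fin k) (hx : x ≠ v.1 ⟨m, by omega⟩)
    (j : Fin (m + 1)) :
    (ahTgt k (m + 1) (ahExt k m v x hx)).1 j
      = if h : j.1 + 1 < m + 1 then v.1 ⟨j.1 + 1, h⟩ else x := rfl

lemma card_ne (k : ℕ) (a : Fin k) : Fintype.card {x : Fin k // x ≠ a} = k - 1 := by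
  classical
  have h1 : Fintype.card {x : Fin k // ¬(x = a)} = Fintype.card (Fin k) - Fintype.card {x : Fin k // x = a} :=
    Fintype.card_subtype_compl _
  have h2 : Fintype.card {x : Fin k // x = a} = 1 := Fintype.card_subtype_eq a
  have h3 : Fintype.card (Fin k) = k := Fintype.card_fin k
  calc Fintype.card {x : Fin k // x ≠ a} = Fintype.card {x : Fin k // ¬(x = a)} := by
        apply Fintype.card_congr; rfl
    _ = k - 1 := by rw [h1, h2, h3]

lemma fin_congr {k t : ℕ} (w : Fin t → Fin k) {a b : Fin t} (h : a.1 = b.1) : w a = w b := by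
  congr 1
  exact Fin.ext h

lemma AHW.ne {k t : ℕ} (w : AHW k t) {a b : Fin t} (hab : a.1 + 1 = b.1) : w.1 a ≠ w.1 b := by
  have h2 : b.1 < t := b.2
  have h3 := w.2 a.1 (by omega)
  intro hc
  apply h3
  have e1 : w.1 ⟨a.1, by omega⟩ = w.1 a := fin_congr _ rfl
  have e2 : w.1 ⟨a.1 + 1, by omega⟩ = w.1 b := fin_congr _ hab
  rw [e1, e2]
  exact hc

lemma ahSrc_val {k m : ℕ} {e : AHW k (m + 1)} {v : AHW k m} (h : ahSrc k m e = v)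
    (j : Fin m) : e.1 ⟨j.1, by omega⟩ = v.1 j :=
  congrFun (congrArg Subtype.val h) j

lemma ahTgt_val {k m : ℕ} {e : AHW k (m + 1)} {v : AHW k m} (h : ahTgt k m e = v)
    (j : Fin m) : e.1 ⟨j.1 + 1, by omega⟩ = v.1 j :=
  congrFun (congrArg Subtype.val h) j

/-- Prepending a letter differing from the first letter. -/
def ahPre (k m : ℕ) (v : AHW k (m + 1)) (x : Fin k) (hx : x ≠ v.1 ⟨0, by omega⟩) :
    AHW k (m + 2) :=
  ⟨fun j => if h : 0 < j.1 then v.1 ⟨j.1 - 1, by omega⟩ else x, by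
    intro i h
    by_cases h0 : 0 < i
    · simp only [dif_pos h0, dif_pos (by omega : 0 < i + 1)]
      intro hc
      exact AHW.ne v (a := ⟨i - 1, by omega⟩) (b := ⟨i + 1 - 1, by omega⟩) (by show i - 1 + 1 = i + 1 - 1; omega) hc
    · have hi : i = 0 := by omega
      subst hi
      simp only [dif_neg h0, dif_pos (by omega : 0 < 0 + 1)]
      intro hc
      apply hx
      rw [hc]⟩

lemma ahTgt_pre (k m : ℕ) (v : AHW k (m + 1)) (x : Fin k) (hx : x ≠ v.1 ⟨0, by omega⟩) :
    ahTgt k (m + 1) (ahPre k m v x hx) = v := by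
  apply Subtype.ext
  funext j
  show (if h : 0 < j.1 + 1 then v.1 ⟨j.1 + 1 - 1, by omega⟩ else x) = v.1 j
  rw [dif_pos (by omega)]
  exact fin_congr v.1 (by show j.1 + 1 - 1 = j.1; omega)

/-- The fiber of `ahSrc` over `v` is equivalent to letters differing from the last letter. -/
def srcFiberEquiv (k m : ℕ) (v : AHW k (m + 1)) :
    {e : AHW k (m + 2) // ahSrc k (m + 1) e = v} ≃ {x : Fin k // x ≠ v.1 ⟨m, by omega⟩} where
  toFun e := ⟨e.1.1 ⟨m + 1, by omega⟩, by
    intro hc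
    have he : e.1.1 ⟨m, by omega⟩ = v.1 ⟨m, by omega⟩ := ahSrc_val e.2 ⟨m, by omega⟩
    exact AHW.ne e.1 (a := ⟨m, by omega⟩) (b := ⟨m + 1, by omega⟩) rfl (he.trans hc.symm)⟩
  invFun x := ⟨ahExt k m v x.1 x.2, ahSrc_ext k m v x.1 x.2⟩
  left_inv e := by
    apply Subtype.ext
    apply Subtype.ext
    funext j
    show (if h : j.1 < m + 1 then v.1 ⟨j.1, h⟩ else e.1.1 ⟨m + 1, by omega⟩) = e.1.1 j
    by_cases h : j.1 < m + 1
    · rw [dif_pos h]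
      exact (ahSrc_val e.2 ⟨j.1, h⟩).symm.trans (fin_congr e.1.1 rfl)
    · rw [dif_neg h]
      exact fin_congr e.1.1 (by show m + 1 = j.1; have := j.2; omega)
  right_inv x := by
    apply Subtype.ext
    show (if h : m + 1 < m + 1 then v.1 ⟨m + 1, h⟩ else x.1) = x.1
    rw [dif_neg (by omega)]

/-- The fiber of `ahTgt` over `v` is equivalent to letters differing from the first letter. -/
def tgtFiberEquiv (k m : ℕ) (v : AHW k (m + 1)) :
    {e : AHW k (m + 2) // ahTgt k (m + 1) e = v} ≃ {x : Fin k // x ≠ v.1 ⟨0, by omega⟩} where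
  toFun e := ⟨e.1.1 ⟨0, by omega⟩, by
    intro hc
    have he : e.1.1 ⟨0 + 1, by omega⟩ = v.1 ⟨0, by omega⟩ := ahTgt_val e.2 ⟨0, by omega⟩
    exact AHW.ne e.1 (a := ⟨0, by omega⟩) (b := ⟨0 + 1, by omega⟩) rfl (hc.trans he.symm)⟩
  invFun x := ⟨ahPre k m v x.1 x.2, ahTgt_pre k m v x.1 x.2⟩
  left_inv e := by
    apply Subtype.ext
    apply Subtype.ext
    funext j
    show (if h : 0 < j.1 then v.1 ⟨j.1 - 1, by omega⟩ else e.1.1 ⟨0, by omega⟩) = e.1.1 j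
    by_cases h : 0 < j.1
    · rw [dif_pos h]
      exact (ahTgt_val e.2 ⟨j.1 - 1, by omega⟩).symm.trans (fin_congr e.1.1 (by show j.1 - 1 + 1 = j.1; omega))
    · rw [dif_neg h]
      exact fin_congr e.1.1 (by show (0 : ℕ) = j.1; omega)
  right_inv x := by
    apply Subtype.ext
    show (if h : (0 : ℕ) < 0 then v.1 ⟨0 - 1, by omega⟩ else x.1) = x.1
    rw [dif_neg (by omega)]

lemma card_srcFiber (k m : ℕ) (v : AHW k (m + 1)) :
    Fintype.card {e : AHW k (m + 2) // ahSrc k (m + 1) e = v} = k - 1 := by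
  rw [Fintype.card_congr (srcFiberEquiv k m v)]
  exact card_ne k _

lemma card_tgtFiber (k m : ℕ) (v : AHW k (m + 1)) :
    Fintype.card {e : AHW k (m + 2) // ahTgt k (m + 1) e = v} = k - 1 := by
  rw [Fintype.card_congr (tgtFiberEquiv k m v)]
  exact card_ne k _

lemma card_AHW_one (k : ℕ) : Fintype.card (AHW k 1) = k := by
  have e : AHW k 1 ≃ Fin k :=
    { toFun := fun w => w.1 ⟨0, by omega⟩
      invFun := fun x => ⟨fun _ => x, fun i h => absurd h (by omega)⟩
      left_inv := fun w => by
        apply Subtype.ext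
        funext j
        exact (fin_congr w.1 (by have := j.2; omega) : w.1 ⟨0, by omega⟩ = w.1 j)
      right_inv := fun x => rfl }
  rw [Fintype.card_congr e, Fintype.card_fin]

lemma card_AHW (k m : ℕ) : Fintype.card (AHW k (m + 1)) = k * (k - 1) ^ m := by
  induction m with
  | zero => simpa using card_AHW_one k
  | succ m ih =>
    have h1 : Fintype.card (AHW k (m + 2))
        = ∑ v : AHW k (m + 1), Fintype.card {e : AHW k (m + 2) // ahSrc k (m + 1) e = v} := by
      rw [← Fintype.card_sigma]
      exact (Fintype.card_congr (Equiv.sigmaFiberEquiv (ahSrc k (m + 1)))).symm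
    rw [h1]
    simp only [card_srcFiber]
    rw [Finset.sum_const, smul_eq_mul, Finset.card_univ, ih]
    ring


lemma get_congr {α : Type*} (l : List α) {a b : ℕ} (ha : a < l.length) (hb : b < l.length)
    (h : a = b) : l.get ⟨a, ha⟩ = l.get ⟨b, hb⟩ := by subst h; rfl

lemma reach_aux (k m : ℕ) :
    ∀ t : ℕ, t ≤ m + 1 → ∀ u v : AHW k (m + 1),
      (∀ j : ℕ, (hj : j < m + 1 - t) → u.1 ⟨j + t, by omega⟩ = v.1 ⟨j, by omega⟩) →
      (∀ _ : t ≠ 0, u.1 ⟨m, by omega⟩ ≠ v.1 ⟨m + 1 - t, by omega⟩) →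
      EReach (ahSrc k (m + 1)) (ahTgt k (m + 1)) u v := by
  intro t
  induction t with
  | zero =>
    intro _ u v hov _
    have huv : u = v := by
      apply Subtype.ext
      funext j
      have h1 := hov j.1 (by have := j.2; omega)
      exact (fin_congr u.1 (by show j.1 = j.1 + 0; omega)).trans (h1.trans (fin_congr v.1 rfl))
    rw [huv]
    exact EReach.refl v
  | succ t ih =>
    intro ht u v hov hguard
    set x : Fin k := v.1 ⟨m + 1 - (t + 1), by omega⟩ with hxdef
    have hx : x ≠ u.1 ⟨m, by omega⟩ := (hguard (by omega)).symm
    set e : AHW k (m + 2) := ahExt k m u x hx with hedef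
    have h1 : ahSrc k (m + 1) e = u := ahSrc_ext k m u x hx
    have hrec : EReach (ahSrc k (m + 1)) (ahTgt k (m + 1)) (ahTgt k (m + 1) e) v := by
      apply ih (by omega)
      · intro j hj
        show (if h : j + t + 1 < m + 1 then u.1 ⟨j + t + 1, h⟩ else x) = v.1 ⟨j, by omega⟩
        by_cases hc : j + t + 1 < m + 1
        · rw [dif_pos hc]
          exact (fin_congr u.1 (by show j + t + 1 = j + (t + 1); omega)).trans
            (hov j (by omega))
        · rw [dif_neg hc]
          exact fin_congr v.1 (by show m + 1 - (t + 1) = j; omega)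
      · intro h1 hc
        have hc' : x = v.1 ⟨m + 1 - t, by omega⟩ := by
          refine Eq.trans ?_ hc
          show x = (if h : m + 1 < m + 1 then u.1 ⟨m + 1, h⟩ else x)
          rw [dif_neg (by omega)]
        exact AHW.ne v (a := ⟨m + 1 - (t + 1), by omega⟩) (b := ⟨m + 1 - t, by omega⟩)
          (by show m + 1 - (t + 1) + 1 = m + 1 - t; omega) (hxdef ▸ hc')
    have h2 := EReach.cons (src := ahSrc k (m + 1)) (tgt := ahTgt k (m + 1)) e hrec
    rw [h1] at h2
    exact h2

lemma ah_conn (k m : ℕ) (hk : 2 ≤ k) (u v : AHW k (m + 1)) :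
    EReach (ahSrc k (m + 1)) (ahTgt k (m + 1)) u v := by
  by_cases h : u.1 ⟨m, by omega⟩ = v.1 ⟨0, by omega⟩
  · obtain ⟨y, hy⟩ : ∃ y : Fin k, y ≠ u.1 ⟨m, by omega⟩ := by
      rcases eq_or_ne (u.1 ⟨m, by omega⟩).1 0 with h0 | h0
      · exact ⟨⟨1, by omega⟩, Fin.ne_of_val_ne (by show (1 : ℕ) ≠ _; omega)⟩
      · exact ⟨⟨0, by omega⟩, Fin.ne_of_val_ne (by show (0 : ℕ) ≠ _; omega)⟩
    set e : AHW k (m + 2) := ahExt k m u y hy with hedef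
    have h1 : ahSrc k (m + 1) e = u := ahSrc_ext k m u y hy
    have hrec : EReach (ahSrc k (m + 1)) (ahTgt k (m + 1)) (ahTgt k (m + 1) e) v := by
      apply reach_aux k m (m + 1) le_rfl
      · intro j hj
        omega
      · intro _ hc
        have hc1 : y = v.1 ⟨m + 1 - (m + 1), by omega⟩ := by
          refine Eq.trans ?_ hc
          show y = (if h : m + 1 < m + 1 then u.1 ⟨m + 1, h⟩ else y)
          rw [dif_neg (by omega)]
        have hc2 : y = v.1 ⟨0, by omega⟩ := hc1.trans (fin_congr v.1 (by show m + 1 - (m + 1) = 0; omega))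
        exact hy (hc2.trans h.symm)
    have h2 := EReach.cons (src := ahSrc k (m + 1)) (tgt := ahTgt k (m + 1)) e hrec
    rw [h1] at h2
    exact h2
  · apply reach_aux k m (m + 1) le_rfl
    · intro j hj
      omega
    · intro _ hc
      exact h (hc.trans (fin_congr v.1 (by show m + 1 - (m + 1) = 0; omega)))

lemma ah_balance (k m : ℕ) (v : AHW k (m + 1)) :
    (Finset.univ.filter fun e : AHW k (m + 2) => ahSrc k (m + 1) e = v).card
      = (Finset.univ.filter fun e : AHW k (m + 2) => ahTgt k (m + 1) e = v).card := by
  rw [← Fintype.card_subtype, ← Fintype.card_subtype, card_srcFiber, card_tgtFiber]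

/-- An adjacency-hopping edge word exists. -/
def ahEdge0 (k m : ℕ) (hk : 2 ≤ k) : AHW k (m + 2) :=
  ⟨fun j => if j.1 % 2 = 0 then ⟨0, by omega⟩ else ⟨1, by omega⟩, by
    intro i h
    by_cases h0 : i % 2 = 0
    · simp only [if_pos h0, if_neg (by omega : ¬(i + 1) % 2 = 0)]
      exact Fin.ne_of_val_ne (by show (0 : ℕ) ≠ 1; omega)
    · simp only [if_neg h0, if_pos (by omega : (i + 1) % 2 = 0)]
      exact Fin.ne_of_val_ne (by show (1 : ℕ) ≠ 0; omega)⟩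

/-- For all `k ≥ 2`, `n ≥ 2` there exists an adjacency-hopping
de Bruijn sequence `H(k,n)` of length `k * (k-1)^(n-1)`. -/
theorem stmt_6 (k n : ℕ) (hk : 2 ≤ k) (hn : 2 ≤ n) :
    ∃ s : ZMod (k * (k - 1) ^ (n - 1)) → Fin k,
      IsAHDB k n (k * (k - 1) ^ (n - 1)) s := by
  obtain ⟨m, rfl⟩ : ∃ m, n = m + 2 := ⟨n - 2, by omega⟩
  set L : ℕ := k * (k - 1) ^ (m + 2 - 1) with hLdef
  have hL1 : (1 : ℕ) ≤ (k - 1) ^ (m + 1) := Nat.one_le_pow _ _ (by omega)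
  have hLpos : 2 ≤ L := by
    rw [hLdef]
    show 2 ≤ k * (k - 1) ^ (m + 1)
    calc 2 = 2 * 1 := by ring
    _ ≤ k * (k - 1) ^ (m + 1) := Nat.mul_le_mul hk hL1
  haveI : NeZero L := ⟨by omega⟩
  haveI : Fact (1 < L) := ⟨by omega⟩
  -- Euler circuit
  obtain ⟨l, hct, hall⟩ := euler_circuit (src := ahSrc k (m + 1)) (tgt := ahTgt k (m + 1))
    (ah_balance k m) (ah_conn k m hk) (ahEdge0 k m hk)
  obtain ⟨hne, hnd, hch, hw⟩ := hct
  have hlen : l.length = L := by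
    have h1 : l.toFinset = Finset.univ := Finset.eq_univ_of_forall (fun e => List.mem_toFinset.mpr (hall e))
    have h2 := List.toFinset_card_of_nodup hnd
    rw [h1, Finset.card_univ, card_AHW k (m + 1)] at h2
    rw [← h2, hLdef]
    rfl
  have hvlt : ∀ i : ZMod L, (ZMod.val i) < l.length := by
    intro i
    rw [hlen]
    exact ZMod.val_lt i
  set ed : ZMod L → AHW k (m + 2) := fun i => l.get ⟨ZMod.val i, hvlt i⟩ with heddef
  -- cyclic chain property
  have hsucc : ∀ i : ZMod L, ahSrc k (m + 1) (ed (i + 1)) = ahTgt k (m + 1) (ed i) := by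
    intro i
    have hval : (i + 1).val = (i.val + 1) % L := by
      rw [ZMod.val_add, ZMod.val_one]
    by_cases hcase : i.val + 1 < L
    · have hval' : (i + 1).val = i.val + 1 := by rw [hval, Nat.mod_eq_of_lt hcase]
      have hchain := List.isChain_iff_getElem.mp hch i.val (by omega)
      have hed1 : ed (i + 1) = l.get ⟨i.val + 1, by omega⟩ :=
        get_congr l (hvlt (i + 1)) (by omega) hval'
      rw [hed1]
      exact hchain.symm
    · have hieq : i.val + 1 = L := by have := ZMod.val_lt i; omega
      have hval' : (i + 1).val = 0 := by rw [hval, hieq, Nat.mod_self]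
      have hh : l.head hne = l.get ⟨0, by omega⟩ := by
        rcases l with _ | ⟨a, t⟩
        · exact absurd rfl hne
        · rfl
      have hed1 : ed (i + 1) = l.head hne := by
        rw [hh]
        exact get_congr l (hvlt (i + 1)) (by omega) hval'
      have hed2 : ed i = l.getLast hne := by
        rw [List.getLast_eq_getElem]
        exact get_congr l (hvlt i) (by omega) (by omega)
      rw [hed1, hed2]
      exact (hw _ (by rw [List.getLast?_eq_getLast hne]; simp)
        _ (by rw [List.head?_eq_head hne]; simp)).symm
  set s : ZMod L → Fin k := fun i => (ed i).1 ⟨0, by omega⟩ with hsdef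
  -- window lemma
  have hwin : ∀ j : ℕ, (hj : j < m + 2) → ∀ i : ZMod L,
      s (i + (j : ZMod L)) = (ed i).1 ⟨j, hj⟩ := by
    intro j
    induction j with
    | zero =>
      intro hj i
      show s (i + ((0 : ℕ) : ZMod L)) = _
      rw [Nat.cast_zero, add_zero]
    | succ j ih =>
      intro hj i
      have hre : i + ((j + 1 : ℕ) : ZMod L) = (i + 1) + (j : ZMod L) := by
        push_cast
        ring
      rw [hre, ih (by omega) (i + 1)]
      have h1 : (ed (i + 1)).1 ⟨j, by omega⟩
          = (ahSrc k (m + 1) (ed (i + 1))).1 ⟨j, by omega⟩ := rfl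
      rw [h1, hsucc i]
      rfl
  refine ⟨s, ?_, ?_⟩
  · -- neighbors differ
    intro i
    have h0 : s i = (ed i).1 ⟨0, by omega⟩ := rfl
    have h1 : s (i + 1) = (ed i).1 ⟨1, by omega⟩ := by
      have := hwin 1 (by omega) i
      rw [Nat.cast_one] at this
      exact this
    rw [h0, h1]
    exact AHW.ne (ed i) (a := ⟨0, by omega⟩) (b := ⟨1, by omega⟩) rfl
  · -- every adjacency-hopping word occurs exactly once
    intro w hwadj
    set ew : AHW k (m + 2) := ⟨w, hwadj⟩ with hewdef
    obtain ⟨p, hp⟩ := List.get_of_mem (hall ew)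
    refine ⟨((p.1 : ℕ) : ZMod L), ?_, ?_⟩
    · intro j
      have hpv : ZMod.val ((p.1 : ℕ) : ZMod L) = p.1 := by
        rw [ZMod.val_natCast, Nat.mod_eq_of_lt (by rw [← hlen]; exact p.2)]
      have hed : ed ((p.1 : ℕ) : ZMod L) = ew := by
        rw [← hp]
        exact get_congr l (hvlt _) p.2 hpv
      have := hwin j.1 (by have := j.2; omega) ((p.1 : ℕ) : ZMod L)
      rw [hed] at this
      exact this.trans (fin_congr w rfl)
    · intro i hi
      have hedi : ed i = ew := by
        apply Subtype.ext
        funext j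
        have h1 := hwin j.1 (by have := j.2; omega) i
        have h2 := hi j
        rw [h1] at h2
        exact (fin_congr (ed i).1 rfl).symm.trans h2
      have hpv : ZMod.val ((p.1 : ℕ) : ZMod L) = p.1 := by
        rw [ZMod.val_natCast, Nat.mod_eq_of_lt (by rw [← hlen]; exact p.2)]
      have hed : ed ((p.1 : ℕ) : ZMod L) = ew := by
        rw [← hp]
        exact get_congr l (hvlt _) p.2 hpv
      have hgeteq : l.get ⟨i.val, hvlt i⟩ = l.get ⟨ZMod.val ((p.1 : ℕ) : ZMod L), hvlt _⟩ := by
        show ed i = ed ((p.1 : ℕ) : ZMod L)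
        rw [hedi, hed]
      have hfin := (hnd.get_inj_iff).mp hgeteq
      have hvv : i.val = ZMod.val ((p.1 : ℕ) : ZMod L) := congrArg Fin.val hfin
      calc i = ((i.val : ℕ) : ZMod L) := (ZMod.natCast_zmod_val i).symm
        _ = ((p.1 : ℕ) : ZMod L) := by rw [hvv, ZMod.natCast_zmod_val]
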